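/- Let X be a complete class of finite groups, G a finite group, H a Hall X-subgroup of G, and N a subnormal subgroup of G. Then H ∩ N is a Hall X-subgroup of N. -/

import Mathlib

open scoped Pointwise

/-- A class of (finite) groups, given as a predicate on group types. -/
abbrev GroupClass := ∀ (G : Type) [Group G], Prop

/-- `X` is a complete class: nonempty and closed under subgroups, quotients
(homomorphic images) and extensions, within finite groups. -/
def IsCompleteClass (X : GroupClass) : Prop :=
  (∃ (G : Type) (_ : Group G) (_ : Finite G), X G) ∧
  (∀ (G H : Type) [Group G] [Group H], X G → (G ≃* H) → X H) ∧
  (∀ (G : Type) [Group G], X G → ∀ H : Subgroup G, X H) ∧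
  (∀ (G : Type) [Group G] (N : Subgroup G) [N.Normal], X G → X (G ⧸ N)) ∧
  (∀ (G : Type) [Group G] [Finite G] (N : Subgroup G) [N.Normal],
      X ↥N → X (G ⧸ N) → X G)

/-- An `X'`-group: a group with no nontrivial `X`-subgroups. -/
def IsXPrimeGroup (X : GroupClass) (G : Type) [Group G] : Prop :=
  ∀ K : Subgroup G, X ↥K → K = ⊥

/-- A Hall `X`-subgroup: an `X`-subgroup whose index is not divisible by any
prime `p` such that `X` contains a group of order `p`. -/
def IsHallXSubgroup (X : GroupClass) {G : Type} [Group G] (H : Subgroup G) : Prop :=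
  X ↥H ∧ ∀ p : ℕ, p.Prime →
    (∃ (P : Type) (_ : Group P), X P ∧ Nat.card P = p) → ¬ p ∣ H.index

/-- A maximal `X`-subgroup: an `X`-subgroup maximal under inclusion among
`X`-subgroups. -/
def IsMaxXSubgroup (X : GroupClass) {G : Type} [Group G] (H : Subgroup G) : Prop :=
  X ↥H ∧ ∀ K : Subgroup G, X ↥K → H ≤ K → K = H

/-- `H` is subnormal in `G`. -/
def IsSubnormalIn {G : Type} [Group G] (H : Subgroup G) : Prop :=
  ∃ (n : ℕ) (c : ℕ → Subgroup G), c 0 = H ∧ c n = ⊤ ∧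
    ∀ i < n, c i ≤ c (i + 1) ∧ ((c i).subgroupOf (c (i + 1))).Normal

/-- A submaximal `X`-subgroup: `H = G ∩ H*` for some maximal `X`-subgroup `H*`
of a finite group `G*` containing `G` as a subnormal subgroup. -/
def IsSubmaxXSubgroup (X : GroupClass) {G : Type} [Group G] (H : Subgroup G) : Prop :=
  ∃ (Gs : Type) (_ : Group Gs) (_ : Finite Gs) (ι : G →* Gs),
    Function.Injective ι ∧ IsSubnormalIn ι.range ∧
    ∃ Hs : Subgroup Gs, IsMaxXSubgroup X Hs ∧ H = Hs.comap ι

/-- The factor `B/A` is an `X`-group (phrased via a surjective hom with kernel `A`). -/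
def IsXFactor (X : GroupClass) {G : Type} [Group G] (A B : Subgroup G) : Prop :=
  ∃ (Q : Type) (_ : Group Q) (φ : ↥B →* Q),
    Function.Surjective φ ∧ φ.ker = A.subgroupOf B ∧ X Q

/-- The factor `B/A` is an `X'`-group. -/
def IsXPrimeFactor (X : GroupClass) {G : Type} [Group G] (A B : Subgroup G) : Prop :=
  ∃ (Q : Type) (_ : Group Q) (φ : ↥B →* Q),
    Function.Surjective φ ∧ φ.ker = A.subgroupOf B ∧ IsXPrimeGroup X Q

/-- `G` is `X`-separable: it has a normal series whose factors are `X`- or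
`X'`-groups. -/
def IsXSeparable (X : GroupClass) (G : Type) [Group G] : Prop :=
  ∃ (m : ℕ) (s : ℕ → Subgroup G), s 0 = ⊤ ∧ s m = ⊥ ∧
    ∀ i < m, s (i + 1) ≤ s i ∧ (s i).Normal ∧ (s (i + 1)).Normal ∧
      (IsXFactor X (s (i + 1)) (s i) ∨ IsXPrimeFactor X (s (i + 1)) (s i))

/-- `G` is `X`-separable of `X`-length at most `n`: it has a normal series with
factors `X`- or `X'`-groups and at most `n` `X`-factors. -/
def XSeparableLengthLE (X : GroupClass) (G : Type) [Group G] (n : ℕ) : Prop :=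
  ∃ (m : ℕ) (s : ℕ → Subgroup G) (f : ℕ → Bool), s 0 = ⊤ ∧ s m = ⊥ ∧
    ((Finset.range m).filter (fun i => f i = true)).card ≤ n ∧
    ∀ i < m, s (i + 1) ≤ s i ∧ (s i).Normal ∧ (s (i + 1)).Normal ∧
      (if f i = true then IsXFactor X (s (i + 1)) (s i)
       else IsXPrimeFactor X (s (i + 1)) (s i))

/-- The conjugate `H^x = x⁻¹ H x`. -/
def conjS {G : Type} [Group G] (x : G) (H : Subgroup G) : Subgroup G :=
  H.map (MulAut.conj x⁻¹).toMonoidHom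

/-- `H ≡ K` modulo the tail series `(*i)` of `s`: the projections onto the
factors `s j / s (j+1)` for `i ≤ j < n` coincide, compared as subsets
`(H ∩ s j)·s (j+1)`. -/
def CongModFrom {G : Type} [Group G] (s : ℕ → Subgroup G) (n i : ℕ)
    (H K : Subgroup G) : Prop :=
  ∀ j, i ≤ j → j < n →
    ((↑(H ⊓ s j) * ↑(s (j + 1)) : Set G) = ↑(K ⊓ s j) * ↑(s (j + 1)))

/-- `H ≡ K (mod *)`: all projections onto the factors of the series coincide. -/
def CongMod {G : Type} [Group G] (s : ℕ → Subgroup G) (n : ℕ)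
    (H K : Subgroup G) : Prop :=
  CongModFrom s n 0 H K

/-- The normalizer of `H` modulo the tail series `(*i)`: elements stabilizing
the tail series with `H^x ≡ H (mod *i)`. -/
def NStarFrom {G : Type} [Group G] (s : ℕ → Subgroup G) (n i : ℕ)
    (H : Subgroup G) : Set G :=
  { x | (∀ j, i ≤ j → j ≤ n → conjS x (s j) = s j) ∧
        CongModFrom s n i (conjS x H) H }


lemma relindex_dvd_index_of_normal_right {G : Type*} [Group G] [Finite G]
    (H K : Subgroup G) [K.Normal] : H.relIndex K ∣ H.index := by
  have key : H.relIndex K * K.index = K.relIndex H * H.index := by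
    have h1 : H.relIndex (K ⊓ ⊤) * K.relIndex ⊤ = (H ⊓ K).relIndex ⊤ :=
      Subgroup.relIndex_inf_mul_relIndex H K ⊤
    have h2 : (H ⊓ K).relIndex H * H.index = (H ⊓ K).index :=
      Subgroup.relIndex_mul_index inf_le_left
    rw [inf_top_eq, Subgroup.relIndex_top_right, Subgroup.relIndex_top_right] at h1
    rw [Subgroup.inf_relIndex_left] at h2
    rw [h1, h2]
  have hKrel : K.relIndex H = K.relIndex (H ⊔ K) := (Subgroup.relIndex_sup_right H K).symm
  have hKtower : K.relIndex (H ⊔ K) * (H ⊔ K).index = K.index :=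
    Subgroup.relIndex_mul_index le_sup_right
  have hHtower : H.relIndex (H ⊔ K) * (H ⊔ K).index = H.index :=
    Subgroup.relIndex_mul_index le_sup_left
  have hKne : K.relIndex (H ⊔ K) ≠ 0 :=
    show (K.subgroupOf (H ⊔ K)).index ≠ 0 from Subgroup.index_ne_zero_of_finite
  have hJne : (H ⊔ K).index ≠ 0 := Subgroup.index_ne_zero_of_finite
  have key2 : H.relIndex K * (K.relIndex (H ⊔ K) * (H ⊔ K).index) =
      K.relIndex (H ⊔ K) * (H.relIndex (H ⊔ K) * (H ⊔ K).index) := by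
    rw [hKtower, hHtower, key, hKrel]
  have : H.relIndex K = H.relIndex (H ⊔ K) := by
    have := key2
    rw [show H.relIndex K * (K.relIndex (H ⊔ K) * (H ⊔ K).index)
        = H.relIndex K * K.relIndex (H ⊔ K) * (H ⊔ K).index by ring,
      show K.relIndex (H ⊔ K) * (H.relIndex (H ⊔ K) * (H ⊔ K).index)
        = H.relIndex (H ⊔ K) * K.relIndex (H ⊔ K) * (H ⊔ K).index by ring] at this
    have h3 := Nat.eq_of_mul_eq_mul_right (Nat.pos_of_ne_zero hJne) this
    exact Nat.eq_of_mul_eq_mul_right (Nat.pos_of_ne_zero hKne) h3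
  rw [this]
  exact Subgroup.relIndex_dvd_index_of_le le_sup_left

theorem stmt3 (X : GroupClass) (hX : IsCompleteClass X)
    (G : Type) [Group G] [Finite G] (H N : Subgroup G)
    (hH : IsHallXSubgroup X H) (hN : IsSubnormalIn N) :
    IsHallXSubgroup X ((H ⊓ N).subgroupOf N) := by
  obtain ⟨hXne, hXiso, hXsub, hXquot, hXext⟩ := hX
  obtain ⟨hHX, hHind⟩ := hH
  obtain ⟨n, c, hc0, hcn, hchain⟩ := hN
  -- X part
  have hXHN : X ↥((H ⊓ N).subgroupOf N) := by
    have h1 : X ↥((H ⊓ N).subgroupOf H) := hXsub _ hHX _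
    have h2 : X ↥(H ⊓ N) :=
      hXiso _ _ h1 (Subgroup.subgroupOfEquivOfLe inf_le_left)
    exact hXiso _ _ h2 (Subgroup.subgroupOfEquivOfLe inf_le_right).symm
  refine ⟨hXHN, ?_⟩
  -- index part
  have key : ∀ k i : ℕ, i + k = n → H.relIndex (c i) ∣ H.index := by
    intro k
    induction k with
    | zero => intro i hi; simp only [Nat.add_zero] at hi; subst hi
              rw [hcn, Subgroup.relIndex_top_right]
    | succ k ih =>
        intro i hi
        have hi' : (i + 1) + k = n := by omega
        have hlt : i < n := by omega
        obtain ⟨hle, hnorm⟩ := hchain i hlt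
        have hstep : H.relIndex (c i) ∣ H.relIndex (c (i + 1)) := by
          have heq : (H.subgroupOf (c (i + 1))).relIndex ((c i).subgroupOf (c (i + 1)))
              = H.relIndex (c i) := Subgroup.relIndex_subgroupOf hle
          rw [← heq]
          have := relindex_dvd_index_of_normal_right
            (H.subgroupOf (c (i + 1))) ((c i).subgroupOf (c (i + 1)))
          simpa [Subgroup.relIndex] using this
        exact hstep.trans (ih (i + 1) hi')
  have hdvd : H.relIndex N ∣ H.index := by
    have := key n 0 (by omega)
    rwa [hc0] at this
  intro p hp hpX hpdvd
  refine hHind p hp hpX (dvd_trans ?_ hdvd)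
  have : ((H ⊓ N).subgroupOf N).index = (H ⊓ N).relIndex N := rfl
  rw [this, Subgroup.inf_relIndex_right] at hpdvd
  exact hpdvd
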